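/- Under the stated assumptions, for every 0 ≤ m < n the σ-algebras F_m and σ(Y) are independent under the measure \tilde P_m, and moreover for every A ∈ F_m and every B ⊆ E one has \tilde P_m[A ∩ {Y ∈ B}] = P[A] · P[Y ∈ B] = \tilde P_m[A] · \tilde P_m[Y ∈ B]. -/

import Mathlib

open MeasureTheory Filter Set

/-- The conditional density `η_m^y = P[Y = y | ℱ m] / P[Y = y]` of the signal `Y`
with respect to the filtration `ℱ`. -/
noncomputable def condDensity {Ω E : Type*} {mΩ : MeasurableSpace Ω}
    (P : Measure Ω) (ℱ : ℕ → MeasurableSpace Ω) (Y : Ω → E) (m : ℕ) (y : E) : Ω → ℝ :=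
  fun ω =>
    (P[Set.indicator {ω' | Y ω' = y} (fun _ => (1 : ℝ)) | ℱ m]) ω / (P {ω' | Y ω' = y}).toReal

/-- The `[0,m]`-martingale preserving measure `d\tilde P_m = (1/η_m^{Y}) dP`. -/
noncomputable def mpMeasure {Ω E : Type*} {mΩ : MeasurableSpace Ω}
    (P : Measure Ω) (ℱ : ℕ → MeasurableSpace Ω) (Y : Ω → E) (m : ℕ) : Measure Ω :=
  P.withDensity fun ω => ENNReal.ofReal (condDensity P ℱ Y m (Y ω) ω)⁻¹

open scoped ENNReal NNReal

section aux

variable {Ω E : Type*} {mΩ : MeasurableSpace Ω}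
    (P : Measure Ω) [IsProbabilityMeasure P] (n : ℕ)
    (ℱ : ℕ → MeasurableSpace Ω)
    (Y : Ω → E)

theorem condexp_eq_toReal_rnDeriv (hle : ∀ m, ℱ m ≤ mΩ) (hY : @Measurable Ω E (ℱ n) ⊤ Y) (m : ℕ) (y : E) :
    P[Set.indicator {ω' | Y ω' = y} (fun _ => (1 : ℝ)) | ℱ m]
      =ᵐ[P] fun ω =>
        (((P.restrict {ω' | Y ω' = y}).trim (hle m)).rnDeriv (P.trim (hle m)) ω).toReal := by
  have hYm : @Measurable Ω E mΩ ⊤ Y := hY.mono (hle n) le_rfl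
  have hsY : MeasurableSet {ω' | Y ω' = y} := hYm (MeasurableSpace.measurableSet_top (s := {y}))
  set t : Set Ω := {ω' | Y ω' = y} with ht
  set ρ : @Measure Ω (ℱ m) := (P.restrict t).trim (hle m) with hρ
  set π : @Measure Ω (ℱ m) := P.trim (hle m) with hπ
  set d : Ω → ℝ≥0∞ := ρ.rnDeriv π with hd
  have hac : ρ ≪ π :=
    (Measure.absolutelyContinuous_of_le Measure.restrict_le_self).trim (hle m)
  have hd_meas : Measurable[ℱ m] d := Measure.measurable_rnDeriv ρ π
  have hd_lt_top_π : ∀ᵐ ω ∂π, d ω < ∞ := Measure.rnDeriv_lt_top ρ π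
  have hnull : ∀ S : Set Ω, MeasurableSet[ℱ m] S → π S = 0 → P S = 0 := by
    intro S hS h
    rwa [trim_measurableSet_eq (hle m) hS] at h
  have hd_lt_top : ∀ᵐ ω ∂P, d ω < ∞ := by
    rw [ae_iff] at hd_lt_top_π ⊢
    have hset : {ω | ¬ d ω < ∞} = d ⁻¹' {∞} := by
      ext ω; simp [lt_top_iff_ne_top]
    rw [hset] at hd_lt_top_π ⊢
    exact hnull _ (hd_meas (measurableSet_singleton _)) hd_lt_top_π
  have hint_π : Integrable (fun ω => (d ω).toReal) π := by
    refine integrable_toReal_of_lintegral_ne_top hd_meas.aemeasurable ?_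
    rw [Measure.lintegral_rnDeriv hac]
    exact (measure_lt_top ρ _).ne
  have hint : Integrable (fun ω => (d ω).toReal) P :=
    integrable_of_integrable_trim (hle m) hint_π
  have hf_int : Integrable (Set.indicator t (fun _ => (1 : ℝ))) P :=
    (integrable_const (1 : ℝ)).indicator hsY
  refine (ae_eq_condExp_of_forall_setIntegral_eq (hle m) hf_int
      (fun s _ _ => hint.integrableOn) (fun s hs _ => ?_) ?_).symm
  · have hs' : MeasurableSet s := hle m s hs
    have lhs : ∫ ω in s, (d ω).toReal ∂P = (∫⁻ ω in s, d ω ∂P).toReal := by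
      exact integral_toReal ((hd_meas.mono (hle m) le_rfl).aemeasurable.restrict)
        (ae_restrict_of_ae hd_lt_top)
    have l2 : ∫⁻ ω in s, d ω ∂P = ∫⁻ ω in s, d ω ∂π := by
      rw [← lintegral_indicator hs' d, ← lintegral_indicator (hs : MeasurableSet[ℱ m] s) d,
        lintegral_trim (hle m) (hd_meas.indicator hs)]
    have l3 : ∫⁻ ω in s, d ω ∂π = P (s ∩ t) := by
      rw [Measure.setLIntegral_rnDeriv' hac hs, hρ,
        trim_measurableSet_eq (hle m) hs, Measure.restrict_apply hs']
    have rhs : ∫ ω in s, Set.indicator t (fun _ => (1 : ℝ)) ω ∂P = (P (s ∩ t)).toReal := by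
      rw [setIntegral_indicator hsY, setIntegral_const]
      simp [measureReal_def]
    rw [lhs, l2, l3, rhs]
  · exact (hd_meas.ennreal_toReal.stronglyMeasurable).aestronglyMeasurable


theorem mp_inter_atom (hle : ∀ m, ℱ m ≤ mΩ) (hY : @Measurable Ω E (ℱ n) ⊤ Y)
    (hYpos : ∀ y ∈ Set.range Y, 0 < P {ω | Y ω = y})
    (hη : ∀ m, m < n → ∀ y ∈ Set.range Y, ∀ᵐ ω ∂P, 0 < condDensity P ℱ Y m y ω)
    (m : ℕ) (hm : m < n) (y : E) (hy : y ∈ Set.range Y)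
    (A : Set Ω) (hA : MeasurableSet[ℱ m] A) :
    mpMeasure P ℱ Y m (A ∩ {ω | Y ω = y}) = P A * P {ω | Y ω = y} := by
  have hYm : @Measurable Ω E mΩ ⊤ Y := hY.mono (hle n) le_rfl
  have hsY : MeasurableSet {ω' | Y ω' = y} := hYm (MeasurableSpace.measurableSet_top (s := {y}))
  set t : Set Ω := {ω' | Y ω' = y} with ht
  set ρ : @Measure Ω (ℱ m) := (P.restrict t).trim (hle m) with hρ
  set π : @Measure Ω (ℱ m) := P.trim (hle m) with hπ
  set d : Ω → ℝ≥0∞ := ρ.rnDeriv π with hd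
  set k : ℝ≥0∞ := P t with hkdef
  have hk0 : k ≠ 0 := (hYpos y hy).ne'
  have hktop : k ≠ ∞ := measure_ne_top P t
  have hkR : 0 < k.toReal := ENNReal.toReal_pos hk0 hktop
  have hac : ρ ≪ π :=
    (Measure.absolutelyContinuous_of_le Measure.restrict_le_self).trim (hle m)
  have hd_meas : Measurable[ℱ m] d := Measure.measurable_rnDeriv ρ π
  have hd_lt_top_π : ∀ᵐ ω ∂π, d ω < ∞ := Measure.rnDeriv_lt_top ρ π
  have hnull : ∀ S : Set Ω, MeasurableSet[ℱ m] S → (π S = 0 ↔ P S = 0) := by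
    intro S hS
    rw [trim_measurableSet_eq (hle m) hS]
  have hd_lt_top : ∀ᵐ ω ∂P, d ω < ∞ := by
    rw [ae_iff] at hd_lt_top_π ⊢
    have hset : {ω | ¬ d ω < ∞} = d ⁻¹' {∞} := by
      ext ω; simp [lt_top_iff_ne_top]
    rw [hset] at hd_lt_top_π ⊢
    exact (hnull _ (hd_meas (measurableSet_singleton _))).mp hd_lt_top_π
  have hcd := condexp_eq_toReal_rnDeriv P n ℱ Y hle hY m y
  have hηy := hη m hm y hy
  -- a.e. positivity of the conditional expectation, hence of d
  have hc_pos : ∀ᵐ ω ∂P, 0 < (d ω).toReal := by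
    filter_upwards [hcd, hηy] with ω h1 h2
    rw [← h1]
    have : 0 < (P[Set.indicator t (fun _ => (1 : ℝ)) | ℱ m]) ω / k.toReal := h2
    have := mul_pos this hkR
    rwa [div_mul_cancel₀ _ hkR.ne'] at this
  have hd_pos : ∀ᵐ ω ∂P, d ω ≠ 0 := by
    filter_upwards [hc_pos] with ω h
    intro h0
    rw [h0] at h; simp at h
  have hd_pos_π : ∀ᵐ ω ∂π, d ω ≠ 0 := by
    rw [ae_iff] at hd_pos ⊢
    have hset : {ω | ¬ d ω ≠ 0} = d ⁻¹' {0} := by ext ω; simp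
    rw [hset] at hd_pos ⊢
    exact (hnull _ (hd_meas (measurableSet_singleton _))).mpr hd_pos
  have hAt : MeasurableSet (A ∩ t) := (hle m A hA).inter hsY
  rw [mpMeasure, withDensity_apply _ hAt]
  have step2 : ∫⁻ ω in A ∩ t, ENNReal.ofReal (condDensity P ℱ Y m (Y ω) ω)⁻¹ ∂P
      = ∫⁻ ω in A ∩ t, k * (d ω)⁻¹ ∂P := by
    refine lintegral_congr_ae ?_
    filter_upwards [ae_restrict_of_ae hcd, ae_restrict_of_ae hηy, ae_restrict_of_ae hd_lt_top,
      ae_restrict_of_ae hc_pos, ae_restrict_mem hAt] with ω h1 h2 h3 h4 hmem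
    have hYω : Y ω = y := hmem.2
    rw [hYω]
    have hcval : condDensity P ℱ Y m y ω = (d ω).toReal / k.toReal := by
      rw [condDensity, h1]
    rw [hcval, inv_div, ENNReal.ofReal_div_of_pos h4, ENNReal.ofReal_toReal hktop,
      ENNReal.ofReal_toReal h3.ne, div_eq_mul_inv]
  rw [step2]
  have hd_inv_meas : Measurable fun ω => (d ω)⁻¹ := (hd_meas.mono (hle m) le_rfl).inv
  rw [lintegral_const_mul k hd_inv_meas]
  have step4 : ∫⁻ ω in A ∩ t, (d ω)⁻¹ ∂P
      = ∫⁻ ω, A.indicator (fun ω => (d ω)⁻¹) ω ∂(P.restrict t) := by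
    rw [lintegral_indicator (hle m A hA), Measure.restrict_restrict (hle m A hA)]
  have hh_meas : Measurable[ℱ m] (A.indicator fun ω => (d ω)⁻¹) := hd_meas.inv.indicator hA
  have step5 : ∫⁻ ω, A.indicator (fun ω => (d ω)⁻¹) ω ∂(P.restrict t)
      = ∫⁻ ω, A.indicator (fun ω => (d ω)⁻¹) ω ∂ρ :=
    (lintegral_trim (hle m) hh_meas).symm
  have step6 : ∫⁻ ω, A.indicator (fun ω => (d ω)⁻¹) ω ∂ρ
      = ∫⁻ ω, d ω * A.indicator (fun ω => (d ω)⁻¹) ω ∂π :=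
    (lintegral_rnDeriv_mul hac hh_meas.aemeasurable).symm
  have step7 : ∫⁻ ω, d ω * A.indicator (fun ω => (d ω)⁻¹) ω ∂π
      = ∫⁻ ω, A.indicator (fun _ => (1 : ℝ≥0∞)) ω ∂π := by
    refine lintegral_congr_ae ?_
    filter_upwards [hd_lt_top_π, hd_pos_π] with ω h1 h2
    by_cases hωA : ω ∈ A
    · rw [Set.indicator_of_mem hωA, Set.indicator_of_mem hωA,
        ENNReal.mul_inv_cancel h2 h1.ne]
    · rw [Set.indicator_of_notMem hωA, Set.indicator_of_notMem hωA, mul_zero]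
  have step8 : ∫⁻ ω, A.indicator (fun _ => (1 : ℝ≥0∞)) ω ∂π = P A := by
    rw [lintegral_indicator hA, setLIntegral_one, trim_measurableSet_eq (hle m) hA]
  rw [step4, step5, step6, step7, step8, mul_comm]

end aux

/-- Under the martingale preserving measure `\tilde P_m`, the σ-algebras `ℱ m` and `σ(Y)`
are independent, and `\tilde P_m[A ∩ {Y ∈ B}] = P[A]·P[Y ∈ B] = \tilde P_m[A]·\tilde P_m[Y ∈ B]`. -/
theorem stmt2 {Ω E : Type*} {mΩ : MeasurableSpace Ω} [Countable E]
    (P : Measure Ω) [IsProbabilityMeasure P] (n : ℕ)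
    (ℱ : ℕ → MeasurableSpace Ω) (hmono : Monotone ℱ) (hle : ∀ m, ℱ m ≤ mΩ)
    (Y : Ω → E) (hY : @Measurable Ω E (ℱ n) ⊤ Y)
    (hYpos : ∀ y ∈ Set.range Y, 0 < P {ω | Y ω = y})
    (hη : ∀ m, m < n → ∀ y ∈ Set.range Y, ∀ᵐ ω ∂P, 0 < condDensity P ℱ Y m y ω) :
    ∀ m, m < n →
      ProbabilityTheory.Indep (ℱ m) (MeasurableSpace.comap Y ⊤) (mpMeasure P ℱ Y m) ∧
      ∀ A : Set Ω, MeasurableSet[ℱ m] A → ∀ B : Set E,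
        mpMeasure P ℱ Y m (A ∩ Y ⁻¹' B) = P A * P (Y ⁻¹' B) ∧
        mpMeasure P ℱ Y m (A ∩ Y ⁻¹' B) =
          mpMeasure P ℱ Y m A * mpMeasure P ℱ Y m (Y ⁻¹' B) := by
  intro m hm
  have hYm : @Measurable Ω E mΩ ⊤ Y := hY.mono (hle n) le_rfl
  have hsY : ∀ y : E, MeasurableSet {ω' | Y ω' = y} :=
    fun y => hYm (MeasurableSpace.measurableSet_top (s := {y}))
  have key := mp_inter_atom P n ℱ Y hle hY hYpos hη m hm
  -- decomposition of preimages
  have hunion : ∀ B : Set E, Y ⁻¹' B = ⋃ y ∈ B ∩ Set.range Y, {ω | Y ω = y} := by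
    intro B
    ext ω
    simp only [Set.mem_preimage, Set.mem_iUnion, Set.mem_inter_iff, Set.mem_range,
      Set.mem_setOf_eq, exists_prop]
    constructor
    · intro h; exact ⟨Y ω, ⟨h, ⟨ω, rfl⟩⟩, rfl⟩
    · rintro ⟨y, ⟨hB, -⟩, rfl⟩; exact hB
  have hdisj : ∀ A : Set Ω, ∀ B : Set E,
      (B ∩ Set.range Y).PairwiseDisjoint (fun y => A ∩ {ω | Y ω = y}) := by
    intro A B y _ y' _ hne
    refine Set.disjoint_left.mpr fun ω h1 h2 => hne ?_
    exact h1.2.symm.trans h2.2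
  have hmain : ∀ A : Set Ω, MeasurableSet[ℱ m] A → ∀ B : Set E,
      mpMeasure P ℱ Y m (A ∩ Y ⁻¹' B) = P A * P (Y ⁻¹' B) := by
    intro A hA B
    have hAmeas : MeasurableSet A := hle m A hA
    have hc : (B ∩ Set.range Y).Countable := (B ∩ Set.range Y).to_countable
    have hAB : A ∩ Y ⁻¹' B = ⋃ y ∈ B ∩ Set.range Y, A ∩ {ω | Y ω = y} := by
      rw [hunion B, Set.inter_iUnion₂]
    rw [hAB, measure_biUnion hc (hdisj A B) (fun y _ => hAmeas.inter (hsY y)),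
      hunion B, measure_biUnion hc ?_ (fun y _ => hsY y)]
    · have : ∀ y : ↥(B ∩ Set.range Y),
          mpMeasure P ℱ Y m (A ∩ {ω | Y ω = y.1}) = P A * P {ω | Y ω = y.1} :=
        fun y => key y.1 y.2.2 A hA
      rw [tsum_congr this, ENNReal.tsum_mul_left]
    · intro y _ y' _ hne
      refine Set.disjoint_left.mpr fun ω h1 h2 => hne ?_
      exact h1.symm.trans h2
  have hmpA : ∀ A : Set Ω, MeasurableSet[ℱ m] A → mpMeasure P ℱ Y m A = P A := by
    intro A hA
    have := hmain A hA Set.univ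
    simpa using this
  have hmpB : ∀ B : Set E, mpMeasure P ℱ Y m (Y ⁻¹' B) = P (Y ⁻¹' B) := by
    intro B
    have := hmain Set.univ MeasurableSet.univ B
    simpa using this
  refine ⟨?_, fun A hA B => ⟨hmain A hA B, by
    rw [hmain A hA B, hmpA A hA, hmpB B]⟩⟩
  rw [ProbabilityTheory.Indep_iff]
  intro t1 t2 h1 h2
  obtain ⟨B, -, rfl⟩ := h2
  rw [hmain t1 h1 B, hmpA t1 h1, hmpB B]
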